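/- Let F be a bijection of a finite set X and let Σ ⊆ X. Suppose every point of Σ has a positive first-return time to Σ under F. If the induced first-return map on Σ is a single cycle and the sum over Σ of the first-return times equals |X|, then F is a single cycle on X. -/

import Mathlib

/-- **Splice lemma.** If `F` is a bijection of a finite set `X`, every point of `Σ` has a
positive first-return time to `Σ`, the induced first-return map on `Σ` is a single cycle,
and the sum of the first-return times over `Σ` equals `|X|`, then `F` is a single cycle. -/
theorem splice_lemma {X : Type*} [Fintype X] [DecidableEq X]
    (F : X → X) (hF : Function.Bijective F)
    (S : Finset X) (ℓ : X → ℕ)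
    (hpos : ∀ w ∈ S, 0 < ℓ w)
    (hret : ∀ w ∈ S, F^[ℓ w] w ∈ S)
    (hmin : ∀ w ∈ S, ∀ k, 0 < k → k < ℓ w → F^[k] w ∉ S)
    (hcycle : ∀ u ∈ S, ∀ v ∈ S, ∃ k : ℕ, (fun w => F^[ℓ w] w)^[k] u = v)
    (hsum : ∑ w ∈ S, ℓ w = Fintype.card X) :
    ∀ x y : X, ∃ k : ℕ, F^[k] x = y := by
  intro x y
  rcases S.eq_empty_or_nonempty with hS | ⟨w₀, hw₀⟩
  · subst hS
    simp only [Finset.sum_empty] at hsum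
    have : IsEmpty X := Fintype.card_eq_zero_iff.mp hsum.symm
    exact this.elim x
  · set Φ := fun w => F^[ℓ w] w with hΦ
    -- iterates of the return map are iterates of F, staying in S
    have horb : ∀ k : ℕ, ∀ w ∈ S, ∃ n : ℕ, Φ^[k] w = F^[n] w ∧ Φ^[k] w ∈ S := by
      intro k
      induction k with
      | zero => intro w hw; exact ⟨0, rfl, hw⟩
      | succ k ih =>
        intro w hw
        obtain ⟨n, h1, h2⟩ := ih w hw
        refine ⟨ℓ (Φ^[k] w) + n, ?_, ?_⟩
        · rw [Function.iterate_succ_apply']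
          conv_lhs => rw [hΦ]
          rw [Function.iterate_add_apply, ← h1]
        · rw [Function.iterate_succ_apply']
          exact hret _ h2
    -- injectivity of the segment map
    have key : ∀ (w : X) (j : ℕ) (w' : X) (j' : ℕ), w ∈ S → w' ∈ S → j < ℓ w → j' < ℓ w' →
        j ≤ j' → F^[j] w = F^[j'] w' → j = j' ∧ w = w' := by
      intro w j w' j' hw hw' hj hj' hle heq
      have hinjF : Function.Injective (F^[j]) := hF.1.iterate j
      have h2 : F^[j'] w' = F^[j] (F^[j' - j] w') := by
        rw [← Function.iterate_add_apply]
        congr 1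
        omega
      have hww : w = F^[j' - j] w' := hinjF (by rw [heq, h2])
      by_cases h0 : j' - j = 0
      · refine ⟨by omega, ?_⟩
        rw [hww, h0, Function.iterate_zero_apply]
      · exact absurd (hww ▸ hw) (hmin w' hw' _ (by omega) (by omega))
    -- every point of X is a forward iterate of w₀
    have hcover : ∀ z : X, ∃ n : ℕ, F^[n] w₀ = z := by
      have hinj : Set.InjOn (fun p : Σ _ : X, ℕ => F^[p.2] p.1)
          ↑(S.sigma fun w => Finset.range (ℓ w)) := by
        rintro ⟨w, j⟩ hp ⟨w', j'⟩ hq heq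
        simp only [Finset.coe_sigma, Set.mem_sigma_iff, Finset.mem_coe, Finset.mem_range] at hp hq
        rcases le_total j j' with hle | hle
        · obtain ⟨h1, h2⟩ := key w j w' j' hp.1 hq.1 hp.2 hq.2 hle heq
          subst h1; subst h2; rfl
        · obtain ⟨h1, h2⟩ := key w' j' w j hq.1 hp.1 hq.2 hp.2 hle heq.symm
          subst h1; subst h2; rfl
      have hcard : ((S.sigma fun w => Finset.range (ℓ w)).image
          (fun p : Σ _ : X, ℕ => F^[p.2] p.1)).card = Fintype.card X := by
        rw [Finset.card_image_of_injOn hinj, Finset.card_sigma]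
        simpa using hsum
      have huniv := Finset.eq_univ_of_card _ hcard
      intro z
      have hz : z ∈ (S.sigma fun w => Finset.range (ℓ w)).image
          (fun p : Σ _ : X, ℕ => F^[p.2] p.1) := huniv ▸ Finset.mem_univ z
      obtain ⟨⟨w, j⟩, hp, hfz⟩ := Finset.mem_image.mp hz
      rw [Finset.mem_sigma] at hp
      obtain ⟨k, hk⟩ := hcycle w₀ hw₀ w hp.1
      obtain ⟨n, h1, _⟩ := horb k w₀ hw₀
      refine ⟨j + n, ?_⟩
      rw [Function.iterate_add_apply, ← h1, hk]
      exact hfz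
    -- finite order of F
    set e : Equiv.Perm X := Equiv.ofBijective F hF with he
    set m : ℕ := orderOf e with hmdef
    have hm1 : 1 ≤ m := orderOf_pos e
    have hmid : F^[m] = id := by
      funext z
      have h1 : (e ^ m) z = z := by rw [pow_orderOf_eq_one e]; rfl
      have h2 : (⇑e)^[m] z = (e ^ m) z := by
        rw [← Equiv.Perm.iterate_eq_pow]
      exact h2.trans h1
    obtain ⟨a, ha⟩ := hcover x
    obtain ⟨b, hb⟩ := hcover y
    refine ⟨b + m * a - a, ?_⟩
    have hle' : a ≤ m * a := Nat.le_mul_of_pos_left a (by omega)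
    have hk : (b + m * a - a) + a = b + m * a := by omega
    rw [← ha, ← Function.iterate_add_apply, hk, Nat.add_comm b (m * a),
      Function.iterate_add_apply, Function.iterate_mul, hmid]
    simpa using hb
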